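/- The standard system of cofinal sequences s_st is a strictly monotone system of cofinal sequences on the ordinals below ω^ω: for every nonzero limit ordinal β < ω^ω and all natural numbers n < k, one has s_st(β, n) < β, s_st(β, n) < s_st(β, k), and sup{s_st(β, n) : n ∈ ℕ} = β. -/

import Mathlib

open Ordinal
open scoped Classical

/-- The standard system of cofinal sequences on the ordinals below `ω^ω`:
if `β = ω^(m+1) * (γ+1)` (such a representation exists and is unique for every
nonzero limit ordinal `β < ω^ω`) then `s_st(β, n) = ω^(m+1)*γ + ω^m*n`;
on ordinals without such a representation the value is irrelevant (set to `0`). -/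
noncomputable def sst (β : Ordinal) (n : ℕ) : Ordinal :=
  if h : ∃ p : ℕ × Ordinal, β = omega0 ^ ((p.1 : Ordinal) + 1) * (p.2 + 1) then
    omega0 ^ ((h.choose.1 : Ordinal) + 1) * h.choose.2 +
      omega0 ^ (h.choose.1 : Ordinal) * n
  else 0

lemma sst_exists_rep (β : Ordinal) (hβ : β < omega0 ^ omega0) (hlim : Order.IsSuccLimit β) :
    ∃ p : ℕ × Ordinal, β = omega0 ^ ((p.1 : Ordinal) + 1) * (p.2 + 1) := by
  have hβ0 : β ≠ 0 := (isSuccLimit_iff_omega0_dvd.1 hlim).1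
  have hex : ∃ N : ℕ, ¬ omega0 ^ ((N : Ordinal) + 1) ∣ β := by
    obtain ⟨c, hc, j, hj⟩ := (lt_omega0_opow omega0_ne_zero).1 hβ
    obtain ⟨N, rfl⟩ := lt_omega0.1 hc
    refine ⟨N, fun hdvd => ?_⟩
    have h1 : β < omega0 ^ ((N : Ordinal) + 1) := by
      refine hj.trans_le ?_
      rw [opow_add, opow_one]
      exact mul_le_mul_right (nat_lt_omega0 j).le _
    exact absurd (le_of_dvd hβ0 hdvd) (not_le.2 h1)
  classical
  let M := Nat.find hex
  have hM : ¬ omega0 ^ ((M : Ordinal) + 1) ∣ β := Nat.find_spec hex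
  have hM0 : M ≠ 0 := by
    intro h0
    apply hM
    rw [h0]
    simpa using (isSuccLimit_iff_omega0_dvd.1 hlim).2
  obtain ⟨m, hm⟩ := Nat.exists_eq_succ_of_ne_zero hM0
  have hmlt : ¬ ¬ omega0 ^ ((m : Ordinal) + 1) ∣ β :=
    Nat.find_min hex (by omega)
  obtain ⟨δ, hδ⟩ := not_not.1 hmlt
  have hδ0 : δ ≠ 0 := by rintro rfl; simp [hδ] at hβ0
  rcases zero_or_succ_or_isSuccLimit δ with h0 | ⟨γ, hγ⟩ | hl
  · exact absurd h0 hδ0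
  · exact ⟨(m, γ), by rw [hδ, ← hγ, ← add_one_eq_succ]⟩
  · exfalso
    obtain ⟨ε, hε⟩ := (isSuccLimit_iff_omega0_dvd.1 hl).2
    apply hM
    rw [hm, hδ, hε, ← mul_assoc]
    push_cast
    refine Dvd.intro ε ?_
    rw [opow_add, opow_add, opow_one]

/-- `s_st` is a strictly monotone system of cofinal sequences on the ordinals
below `ω^ω`: for every nonzero limit ordinal `β < ω^ω` and all naturals
`n < k`: `s_st(β,n) < β`, `s_st(β,n) < s_st(β,k)`, and `sup_n s_st(β,n) = β`. -/
theorem sst_isCofSys (β : Ordinal) (hβ : β < omega0 ^ omega0) (hlim : Order.IsSuccLimit β)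
    (n k : ℕ) (hnk : n < k) :
    sst β n < β ∧ sst β n < sst β k ∧ (⨆ m : ℕ, sst β m) = β := by
  have h : ∃ p : ℕ × Ordinal, β = omega0 ^ ((p.1 : Ordinal) + 1) * (p.2 + 1) :=
    sst_exists_rep β hβ hlim
  obtain ⟨m, γ⟩ := id h.choose
  set p := h.choose with hp
  have hrep : β = omega0 ^ ((p.1 : Ordinal) + 1) * (p.2 + 1) := h.choose_spec
  have hpow_pos : (0:Ordinal) < omega0 ^ (p.1 : Ordinal) := opow_pos _ omega0_pos
  have hkey : ∀ j : ℕ, sst β j = omega0 ^ ((p.1 : Ordinal) + 1) * p.2 +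
      omega0 ^ (p.1 : Ordinal) * j := fun j => by rw [sst, dif_pos h]
  have hlt : ∀ j : ℕ, omega0 ^ (p.1 : Ordinal) * j < omega0 ^ ((p.1 : Ordinal) + 1) := by
    intro j
    rw [opow_add, opow_one]
    exact (isNormal_mul_right hpow_pos).strictMono (nat_lt_omega0 j)
  refine ⟨?_, ?_, ?_⟩
  · rw [hkey, hrep, mul_add, mul_one]
    exact add_lt_add_right (hlt n) _
  · rw [hkey, hkey]
    exact add_lt_add_right ((isNormal_mul_right hpow_pos).strictMono (by exact_mod_cast hnk)) _
  · have : (⨆ j : ℕ, sst β j) = omega0 ^ ((p.1 : Ordinal) + 1) * p.2 +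
        omega0 ^ ((p.1 : Ordinal) + 1) := by
      have hnorm : Order.IsNormal (fun x => omega0 ^ ((p.1 : Ordinal) + 1) * p.2 +
          omega0 ^ (p.1 : Ordinal) * x) :=
        ((isNormal_add_right _).comp (isNormal_mul_right hpow_pos))
      calc (⨆ j : ℕ, sst β j)
          = ⨆ j : ℕ, (fun x => omega0 ^ ((p.1 : Ordinal) + 1) * p.2 +
            omega0 ^ (p.1 : Ordinal) * x) (j : Ordinal) := by
            simp only [hkey]
        _ = omega0 ^ ((p.1 : Ordinal) + 1) * p.2 + omega0 ^ (p.1 : Ordinal) * omega0 :=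
            apply_omega0_of_isNormal hnorm
        _ = _ := by rw [opow_add, opow_one]
    rw [this, hrep, mul_add, mul_one]
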